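/- Let H be the n×n weighted incidence matrix of a weighted complex unit gain cycle C_n with oriented edges e_1,...,e_n, where edge e_i goes from v_i to v_{i+1} (mod n). Then det(H) = (∏_{i=1}^n √(w(e_i))) · (1 − φ(C_n)^{-1}), where φ(C_n) is the product of the edge gains around the cycle. -/

import Mathlib

open Matrix Complex BigOperators

/-- Laplacian of a weighted complex unit gain cycle on `n` vertices (`n ≥ 3`, enforced via
`[NeZero n]` plus a `3 ≤ n` hypothesis in the theorems), where the oriented edge `i` goes
from vertex `i` to vertex `i+1` (indices mod `n`), carries gain `φ i` and weight `w i`. -/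
noncomputable def cycleLap (n : ℕ) [NeZero n] (φ : Fin n → ℂ) (w : Fin n → ℝ) :
    Matrix (Fin n) (Fin n) ℂ := fun i j =>
  if i = j then ((w (i - 1) + w i : ℝ) : ℂ)
  else if j = i + 1 then -(φ i * (w i : ℂ))
  else if i = j + 1 then -((φ j)⁻¹ * (w j : ℂ))
  else 0

/-- Weighted incidence matrix of a weighted complex unit gain cycle on `n` vertices:
rows indexed by vertices, columns by the oriented edges `e : Fin n` (edge `e` goes from
vertex `e` to vertex `e+1`). -/
noncomputable def cycleInc (n : ℕ) [NeZero n] (φ : Fin n → ℂ) (w : Fin n → ℝ) :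
    Matrix (Fin n) (Fin n) ℂ := fun v e =>
  if v = e then (Real.sqrt (w e) : ℂ)
  else if v = e + 1 then -(φ e)⁻¹ * (Real.sqrt (w e) : ℂ)
  else 0

/-- The determinant of the weighted incidence matrix of a weighted complex
unit gain cycle `C_n` equals `(∏ √(w(e_i))) · (1 - φ(C_n)⁻¹)`. -/
theorem det_cycleInc {n : ℕ} [NeZero n] (hn : 3 ≤ n) (φ : Fin n → ℂ) (w : Fin n → ℝ)
    (hφ : ∀ i, ‖φ i‖ = 1) (hw : ∀ i, 0 < w i) :
    (cycleInc n φ w).det =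
      (∏ i, (Real.sqrt (w i) : ℂ)) * (1 - (∏ i, φ i)⁻¹) := by
  obtain ⟨m, rfl⟩ : ∃ m, n = m + 1 := Nat.exists_eq_succ_of_ne_zero (NeZero.ne n)
  have h10 : (1 : Fin (m+1)) ≠ 0 := by
    rw [Ne, Fin.one_eq_zero_iff]; omega
  have hadd : ∀ x : Fin (m+1), x + 1 ≠ x := by
    intro x h
    exact h10 (by have := congrArg (· - x) h; simpa using this)
  set A : Matrix (Fin (m+1)) (Fin (m+1)) ℂ := (fun v e =>
    if v = e then 1 else if v = e + 1 then -(φ e)⁻¹ else 0) with hA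
  have hfac : cycleInc (m+1) φ w = A * Matrix.diagonal (fun e => (Real.sqrt (w e) : ℂ)) := by
    ext v e
    rw [Matrix.mul_diagonal]
    simp only [cycleInc, hA]
    split_ifs <;> ring
  have hclass : ∀ σ : Equiv.Perm (Fin (m+1)), (∀ e, σ e = e ∨ σ e = e + 1) →
      σ = 1 ∨ σ = finRotate (m+1) := by
    intro σ h
    by_cases hid : ∀ e, σ e = e
    · left; ext e; simp [hid]
    · right
      push_neg at hid
      obtain ⟨b, hb⟩ := hid
      have hb1 : σ b = b + 1 := (h b).resolve_left hb
      open Fin.NatCast in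
      have key : ∀ k : ℕ, σ (b + (k : Fin (m+1))) = b + (k : Fin (m+1)) + 1 := by
        intro k
        induction k with
        | zero => simpa using hb1
        | succ k ih =>
          have hcast : ((k+1 : ℕ) : Fin (m+1)) = (k : Fin (m+1)) + 1 := by push_cast; ring
          rw [hcast, ← add_assoc]
          rcases h (b + (k : Fin (m+1)) + 1) with h1 | h1
          · exact absurd (σ.injective (h1.trans ih.symm)) (hadd _)
          · exact h1
      refine Equiv.ext fun x => ?_
      have := key (x - b).val
      rw [Fin.cast_val_eq_self] at this
      have hx : b + (x - b) = x := by abel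
      rw [hx] at this
      rw [this, finRotate_succ_apply]
  have hne : (1 : Equiv.Perm (Fin (m+1))) ≠ finRotate (m+1) := by
    intro h
    have h2 : (0 : Fin (m+1)) = 0 + 1 := (Equiv.ext_iff.mp h 0).trans (finRotate_succ_apply 0)
    rw [zero_add] at h2
    exact h10 h2.symm
  have hAdet : A.det = 1 - (∏ i, φ i)⁻¹ := by
    rw [Matrix.det_apply]
    rw [← Finset.sum_subset (Finset.subset_univ ({1, finRotate (m+1)} :
        Finset (Equiv.Perm (Fin (m+1)))))]
    · rw [Finset.sum_pair hne]
      have t1 : ∏ i, A ((1 : Equiv.Perm (Fin (m+1))) i) i = 1 := by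
        simp [hA]
      have t2 : ∏ i, A (finRotate (m+1) i) i = (-1)^(m+1) * (∏ i, φ i)⁻¹ := by
        have : ∀ i : Fin (m+1), A (finRotate (m+1) i) i = -(φ i)⁻¹ := by
          intro i
          simp [hA, finRotate_succ_apply, hadd i]
        rw [Finset.prod_congr rfl (fun i _ => this i)]
        calc ∏ i : Fin (m+1), -(φ i)⁻¹ = ∏ i : Fin (m+1), (-1) * (φ i)⁻¹ := by
              refine Finset.prod_congr rfl fun i _ => by ring
          _ = (-1)^(m+1) * (∏ i, φ i)⁻¹ := by
              rw [Finset.prod_mul_distrib, Finset.prod_const, Finset.prod_inv_distrib,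
                Finset.card_univ, Fintype.card_fin]
      rw [t1, t2, Equiv.Perm.sign_one, sign_finRotate, one_smul, Units.smul_def]
      simp only [Units.val_pow_eq_pow_val, Units.val_neg, Units.val_one, zsmul_eq_mul]
      have hpow : ((-1 : ℂ))^m * (-1)^(m+1) = -1 := by
        rw [← pow_add]; exact Odd.neg_one_pow ⟨m, by ring⟩
      push_cast
      linear_combination (∏ i, φ i)⁻¹ * hpow
    · intro σ _ hσ
      have : ¬ (σ = 1 ∨ σ = finRotate (m+1)) := by
        simpa [Finset.mem_insert, Finset.mem_singleton] using hσ
      have h2 : ¬ ∀ e, σ e = e ∨ σ e = e + 1 := fun h => this (hclass σ h)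
      push_neg at h2
      obtain ⟨e, he1, he2⟩ := h2
      have : A (σ e) e = 0 := by
        simp only [hA]
        rw [if_neg he1, if_neg he2]
      have h0 : ∏ i, A (σ i) i = 0 := Finset.prod_eq_zero (Finset.mem_univ e) this
      rw [h0, smul_zero]
  rw [hfac, Matrix.det_mul, Matrix.det_diagonal, hAdet]
  ring
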